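/- With G = G_{d,1-d,r} as above, G''(0) = -(r²+1)/(r+1)² - (2d-1)·(r-1)/(r+1)·[1 + 2r/(r+1)²] < 0 for d ≥ 1/2 and r > 1, and G''(1) = -1 + (r+1)/(4√r), a value independent of d; moreover G''(1) > 0 if and only if r > (2+√3)². -/

import Mathlib

/-- `ψ(ρ) = 1 + ((r-1)/(r+1))² ρ(ρ-2)`. -/
noncomputable def psiTL (r ρ : ℝ) : ℝ := 1 + ((r - 1) / (r + 1))^2 * ρ * (ρ - 2)

/-- `φ(ρ) = (1/2)((r+1)/(r-1))(1 - √ψ(ρ))` for `r ≠ 1`, and `φ ≡ 0` for `r = 1`. -/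
noncomputable def phiTL (r ρ : ℝ) : ℝ :=
  if r = 1 then 0 else (1 / 2) * ((r + 1) / (r - 1)) * (1 - Real.sqrt (psiTL r ρ))

/-- The two-lane flux function `G_{γ0,γ1,r}`. -/
noncomputable def GTL (γ0 γ1 r ρ : ℝ) : ℝ :=
  (γ0 + γ1) * (ρ / 2) * (1 - ρ / 2) + (γ0 - γ1) * (1 - ρ) * phiTL r ρ
    - (γ0 + γ1) * (phiTL r ρ)^2

noncomputable def sTL (r ρ : ℝ) : ℝ := Real.sqrt (psiTL r ρ)

lemma aux_lt (r : ℝ) (hr : 1 < r) : ((r - 1) / (r + 1))^2 < 1 := by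
  rw [div_pow, div_lt_one (by positivity)]
  nlinarith

lemma psi_pos (r : ℝ) (hr : 1 < r) (ρ : ℝ) : 0 < psiTL r ρ := by
  have h := aux_lt r hr
  have h2 : (0:ℝ) ≤ ((r - 1) / (r + 1))^2 := sq_nonneg _
  unfold psiTL
  nlinarith [sq_nonneg (ρ - 1)]

lemma sTL_pos (r : ℝ) (hr : 1 < r) (ρ : ℝ) : 0 < sTL r ρ :=
  Real.sqrt_pos.mpr (psi_pos r hr ρ)

lemma sTL_sq (r : ℝ) (hr : 1 < r) (ρ : ℝ) : sTL r ρ ^ 2 = psiTL r ρ :=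
  Real.sq_sqrt (psi_pos r hr ρ).le

lemma hasDerivAt_sTL (r : ℝ) (hr : 1 < r) (ρ : ℝ) :
    HasDerivAt (fun x => sTL r x) (((r - 1) / (r + 1))^2 * (ρ - 1) / sTL r ρ) ρ := by
  have hψ : HasDerivAt (fun x => psiTL r x)
      (((r - 1) / (r + 1))^2 * (2 * ρ - 2)) ρ := by
    have h : HasDerivAt (fun x : ℝ => 1 + ((r - 1) / (r + 1))^2 * x * (x - 2))
        ((((r - 1) / (r + 1))^2 * 1) * (ρ - 2) + (((r - 1) / (r + 1))^2 * ρ) * 1) ρ :=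
      ((((hasDerivAt_id ρ).const_mul (((r - 1) / (r + 1))^2)).mul
        ((hasDerivAt_id ρ).sub_const 2)).const_add 1)
    convert h using 1
    exacts [rfl, by ring]
  have hne : psiTL r ρ ≠ 0 := (psi_pos r hr ρ).ne'
  have h2 := (Real.hasDerivAt_sqrt hne).comp ρ hψ
  refine (h2 : HasDerivAt (fun x => sTL r x) _ ρ).congr_deriv ?_
  rw [show Real.sqrt (psiTL r ρ) = sTL r ρ from rfl]
  have hs : sTL r ρ ≠ 0 := (sTL_pos r hr ρ).ne'
  field_simp

noncomputable def dphiTL (r ρ : ℝ) : ℝ := ((r - 1) / (r + 1)) * (1 - ρ) / (2 * sTL r ρ)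

noncomputable def d2phiTL (r ρ : ℝ) : ℝ :=
  ((r - 1) / (r + 1)) * (((r - 1) / (r + 1))^2 - 1) / (2 * sTL r ρ ^ 3)

lemma phiTL_eq (r : ℝ) (hr : 1 < r) (ρ : ℝ) :
    phiTL r ρ = (1 / 2) * ((r + 1) / (r - 1)) * (1 - sTL r ρ) := by
  rw [phiTL, if_neg (by linarith : r ≠ 1)]; rfl

lemma hasDerivAt_phiTL (r : ℝ) (hr : 1 < r) (ρ : ℝ) :
    HasDerivAt (fun x => phiTL r x) (dphiTL r ρ) ρ := by
  have h : HasDerivAt (fun x => (1 / 2) * ((r + 1) / (r - 1)) * (1 - sTL r x))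
      ((1 / 2) * ((r + 1) / (r - 1)) * -(((r - 1) / (r + 1))^2 * (ρ - 1) / sTL r ρ)) ρ :=
    ((hasDerivAt_sTL r hr ρ).const_sub 1).const_mul _
  have heq : (fun x => phiTL r x) = fun x => (1 / 2) * ((r + 1) / (r - 1)) * (1 - sTL r x) := by
    funext x; exact phiTL_eq r hr x
  rw [heq]
  convert h using 1
  have hs : sTL r ρ ≠ 0 := (sTL_pos r hr ρ).ne'
  have h1 : r + 1 ≠ 0 := by linarith
  have h2 : r - 1 ≠ 0 := by linarith
  rw [dphiTL]
  field_simp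
  ring

lemma hasDerivAt_dphiTL (r : ℝ) (hr : 1 < r) (ρ : ℝ) :
    HasDerivAt (fun x => dphiTL r x) (d2phiTL r ρ) ρ := by
  have hs : sTL r ρ ≠ 0 := (sTL_pos r hr ρ).ne'
  have hden : 2 * sTL r ρ ≠ 0 := by simpa using hs
  have hnum : HasDerivAt (fun x : ℝ => ((r - 1) / (r + 1)) * (1 - x))
      (((r - 1) / (r + 1)) * (-1)) ρ := by
    simpa using ((hasDerivAt_id ρ).const_sub 1).const_mul ((r - 1) / (r + 1))
  have hg : HasDerivAt (fun x => 2 * sTL r x)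
      (2 * (((r - 1) / (r + 1))^2 * (ρ - 1) / sTL r ρ)) ρ :=
    (hasDerivAt_sTL r hr ρ).const_mul 2
  have h := hnum.div hg hden
  have heq : (fun x => dphiTL r x) = fun x => ((r - 1) / (r + 1)) * (1 - x) / (2 * sTL r x) := rfl
  rw [heq]
  refine h.congr_deriv ?_
  have h1 : r + 1 ≠ 0 := by linarith
  have h2 : r - 1 ≠ 0 := by linarith
  have key : ((r - 1) / (r + 1))^2 - 1
      = ((r - 1) / (r + 1))^2 * (ρ - 1)^2 - sTL r ρ ^ 2 := by
    rw [sTL_sq r hr ρ, psiTL]; ring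
  rw [d2phiTL, key]
  field_simp
  ring

noncomputable def dGTL (d r ρ : ℝ) : ℝ :=
  1/2 - ρ/2 + (2*d - 1) * (-(phiTL r ρ) + (1 - ρ) * dphiTL r ρ) - 2 * phiTL r ρ * dphiTL r ρ

noncomputable def d2GTL (d r ρ : ℝ) : ℝ :=
  -(1/2) + (2*d - 1) * (-2 * dphiTL r ρ + (1 - ρ) * d2phiTL r ρ)
    - 2 * (dphiTL r ρ)^2 - 2 * phiTL r ρ * d2phiTL r ρ

lemma hasDerivAt_GTL (d r : ℝ) (hr : 1 < r) (ρ : ℝ) :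
    HasDerivAt (fun x => GTL d (1 - d) r x) (dGTL d r ρ) ρ := by
  have h1 : HasDerivAt (fun x : ℝ => x / 2) (1 / 2) ρ := by
    simpa using (hasDerivAt_id ρ).div_const 2
  have hphi := hasDerivAt_phiTL r hr ρ
  have hA := (h1.const_mul (d + (1 - d))).mul (h1.const_sub 1)
  have hB := (((hasDerivAt_id ρ).const_sub 1).const_mul (d - (1 - d))).mul hphi
  have hC := (hphi.pow 2).const_mul (d + (1 - d))
  have h := (hA.add hB).sub hC
  have heq : (fun x => GTL d (1 - d) r x)
      = fun x => (d + (1 - d)) * (x / 2) * (1 - x / 2)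
          + (d - (1 - d)) * (1 - x) * phiTL r x - (d + (1 - d)) * (phiTL r x)^2 := by
    funext x; rw [GTL]
  rw [heq]
  refine h.congr_deriv ?_
  simp only [dGTL, id_eq]
  push_cast
  ring

lemma hasDerivAt_dGTL (d r : ℝ) (hr : 1 < r) (ρ : ℝ) :
    HasDerivAt (fun x => dGTL d r x) (d2GTL d r ρ) ρ := by
  have hphi := hasDerivAt_phiTL r hr ρ
  have hdphi := hasDerivAt_dphiTL r hr ρ
  have h1 : HasDerivAt (fun x : ℝ => x / 2) (1 / 2) ρ := by
    simpa using (hasDerivAt_id ρ).div_const 2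
  have p1 := h1.const_sub (1/2 : ℝ)
  have p2 := ((hphi.neg).add (((hasDerivAt_id ρ).const_sub 1).mul hdphi)).const_mul (2*d - 1)
  have p3 := (hphi.const_mul 2).mul hdphi
  have h := (p1.add p2).sub p3
  have heq : (fun x => dGTL d r x)
      = fun x => 1/2 - x/2 + (2*d - 1) * (-(phiTL r x) + (1 - x) * dphiTL r x)
          - 2 * phiTL r x * dphiTL r x := rfl
  rw [heq]
  refine h.congr_deriv ?_
  simp only [d2GTL, id_eq]
  ring

lemma iteratedDeriv_two_GTL (d r : ℝ) (hr : 1 < r) (ρ : ℝ) :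
    iteratedDeriv 2 (fun x => GTL d (1 - d) r x) ρ = d2GTL d r ρ := by
  have hderiv : deriv (fun x => GTL d (1 - d) r x) = fun x => dGTL d r x :=
    funext fun x => (hasDerivAt_GTL d r hr x).deriv
  rw [iteratedDeriv_succ, iteratedDeriv_one, hderiv]
  exact (hasDerivAt_dGTL d r hr ρ).deriv

lemma sTL_zero (r : ℝ) : sTL r 0 = 1 := by simp [sTL, psiTL]

lemma sTL_one (r : ℝ) (hr : 1 < r) : sTL r 1 = 2 * Real.sqrt r / (r + 1) := by
  have hrpos : (0:ℝ) < r := by linarith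
  have h : psiTL r 1 = (2 * Real.sqrt r / (r + 1))^2 := by
    have h1 : r + 1 ≠ 0 := by positivity
    have hsq : (2 * Real.sqrt r / (r + 1))^2 = 4 * r / (r + 1)^2 := by
      rw [div_pow, mul_pow, Real.sq_sqrt hrpos.le]; norm_num
    rw [psiTL, hsq]
    field_simp
    ring
  rw [sTL, h, Real.sqrt_sq (by positivity)]

lemma d2GTL_zero (d r : ℝ) (hr : 1 < r) :
    d2GTL d r 0 = -(r^2 + 1) / (r + 1)^2
      - (2 * d - 1) * ((r - 1) / (r + 1)) * (1 + 2 * r / (r + 1)^2) := by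
  have h1 : r + 1 ≠ 0 := by positivity
  have h2 : r - 1 ≠ 0 := by linarith
  simp only [d2GTL, dphiTL, d2phiTL, phiTL_eq r hr, sTL_zero]
  field_simp
  ring

lemma d2GTL_one (d r : ℝ) (hr : 1 < r) :
    d2GTL d r 1 = -1 + (r + 1) / (4 * Real.sqrt r) := by
  have hrpos : (0:ℝ) < r := by linarith
  simp only [d2GTL, dphiTL, d2phiTL, phiTL_eq r hr, sTL_one r hr]
  set t := Real.sqrt r with ht
  have ht0 : 0 < t := Real.sqrt_pos.mpr hrpos
  have ht1 : 1 < t := by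
    have := Real.sq_sqrt hrpos.le
    nlinarith [this]
  have hr2 : r = t^2 := (Real.sq_sqrt hrpos.le).symm
  rw [hr2]
  have e1 : t^2 + 1 ≠ 0 := by positivity
  have e2 : t^2 - 1 ≠ 0 := by nlinarith
  have e3 : t ≠ 0 := ht0.ne'
  field_simp
  ring

theorem GTL_second_derivative_values (d r : ℝ) (hd : 1 / 2 ≤ d) (hr : 1 < r) :
    let G : ℝ → ℝ := fun ρ => GTL d (1 - d) r ρ
    iteratedDeriv 2 G 0 =
        -(r^2 + 1) / (r + 1)^2 - (2 * d - 1) * ((r - 1) / (r + 1)) * (1 + 2 * r / (r + 1)^2) ∧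
    iteratedDeriv 2 G 0 < 0 ∧
    iteratedDeriv 2 G 1 = -1 + (r + 1) / (4 * Real.sqrt r) ∧
    (0 < iteratedDeriv 2 G 1 ↔ (2 + Real.sqrt 3)^2 < r) := by
  intro G
  have hrpos : (0:ℝ) < r := by linarith
  have h0 : iteratedDeriv 2 G 0 =
      -(r^2 + 1) / (r + 1)^2 - (2 * d - 1) * ((r - 1) / (r + 1)) * (1 + 2 * r / (r + 1)^2) := by
    rw [show iteratedDeriv 2 G 0 = d2GTL d r 0 from iteratedDeriv_two_GTL d r hr 0]
    exact d2GTL_zero d r hr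
  have h1 : iteratedDeriv 2 G 1 = -1 + (r + 1) / (4 * Real.sqrt r) := by
    rw [show iteratedDeriv 2 G 1 = d2GTL d r 1 from iteratedDeriv_two_GTL d r hr 1]
    exact d2GTL_one d r hr
  refine ⟨h0, ?_, h1, ?_⟩
  · rw [h0]
    have ha : 0 < (r - 1) / (r + 1) := div_pos (by linarith) (by linarith)
    have hb : 0 < 1 + 2 * r / (r + 1)^2 := by positivity
    have hc : 0 < (r^2 + 1) / (r + 1)^2 := by positivity
    have hdd : 0 ≤ 2 * d - 1 := by linarith
    have key : -(r ^ 2 + 1) / (r + 1) ^ 2 = -((r ^ 2 + 1) / (r + 1) ^ 2) := by ring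
    linarith [key, hc, mul_nonneg (mul_nonneg hdd ha.le) hb.le]
  · rw [h1]
    set t := Real.sqrt r with ht
    have ht0 : 0 < t := Real.sqrt_pos.mpr hrpos
    have ht2 : t^2 = r := Real.sq_sqrt hrpos.le
    have ht1 : 1 < t := by nlinarith
    set u := Real.sqrt 3 with hu
    have hu0 : 0 < u := Real.sqrt_pos.mpr (by norm_num)
    have hu2 : u^2 = 3 := Real.sq_sqrt (by norm_num)
    have hu1 : 1 < u := by nlinarith
    constructor
    · intro h
      have h' : 1 * (4 * t) < r + 1 :=
        (lt_div_iff₀ (by positivity : (0:ℝ) < 4 * t)).mp (by linarith : 1 < (r + 1) / (4 * t))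
      -- t^2 - 4t + 1 > 0, t > 1 > 2 - u  ⇒  t > 2 + u  ⇒ r > (2+u)^2
      have hfac : 0 < (t - 2 - u) * (t - 2 + u) := by nlinarith
      have hpos : 0 < t - 2 + u := by nlinarith
      have h3 : 0 < t - 2 - u := by
        by_contra hcon
        push_neg at hcon
        nlinarith
      have h4 := mul_pos h3 (show (0:ℝ) < t + 2 + u by linarith)
      nlinarith [h4]
    · intro h
      have htu : 2 + u < t := by nlinarith [sq_nonneg (t - (2 + u)), sq_nonneg (t + (2 + u))]
      have : 1 < (r + 1) / (4 * t) := by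
        rw [lt_div_iff₀ (by positivity : (0:ℝ) < 4 * t)]
        nlinarith
      linarith
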